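/- Let k ≥ 1 and let s be a primitive string of length n over Σ whose rotation matrix is sorted by a local ordering of context length k. Then for any symbols x₁, x₂, …, x_{k+1} ∈ Σ with k+1 ≤ n, the right shift map R_i ↦ R_{(i−1) mod n} is an order-preserving bijection between the set of rotations of s that have prefix x₂⋯x_{k+1} and end with x₁ and the set of rotations that have prefix x₁x₂⋯x_{k+1}: the shift of any rotation with prefix x₂⋯x_{k+1} ending with x₁ has prefix x₁x₂⋯x_{k+1}, every rotation with prefix x₁x₂⋯x_{k+1} arises this way, and for two rotations u, v both having prefix x₂⋯x_{k+1} and ending with x₁, u ≺ v if and only if the right shift of u ≺ the right shift of v. -/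

import Mathlib

open scoped Classical

variable {A : Type*}

/-- Longest common prefix of two lists. -/
def lcp [DecidableEq A] : List A → List A → List A
  | a :: as, b :: bs => if a = b then a :: lcp as bs else []
  | _, _ => []

/-- A string is primitive if its cyclic rotations are pairwise distinct. -/
def Primitive (s : List A) : Prop :=
  ∀ i j, i < s.length → j < s.length → s.rotate i = s.rotate j → i = j

/-- The context-adaptive comparison relation on rotations. -/
def Prec [DecidableEq A] (π : List A → A → A → Prop) (u v : List A) : Prop :=
  ∃ a b, u[(lcp u v).length]? = some a ∧ v[(lcp u v).length]? = some b ∧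
    π (lcp u v) a b

/-- The index of the right shift of the rotation `R_i` of a string of length
`n`, i.e. `(i - 1) mod n`. -/
def rshift (n i : ℕ) : ℕ := (i + n - 1) % n

theorem lcp_self [DecidableEq A] (l : List A) : lcp l l = l := by
  induction l with
  | nil => rfl
  | cons a as ih => simp [lcp, ih]

theorem lcp_prefix_left [DecidableEq A] : ∀ u v : List A, lcp u v <+: u
  | [], _ => by simp [lcp]
  | a :: as, [] => by simp [lcp]
  | a :: as, b :: bs => by
      by_cases h : a = b
      · simpa [lcp, h] using lcp_prefix_left as bs
      · simp [lcp, h]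

theorem lcp_prefix_right [DecidableEq A] : ∀ u v : List A, lcp u v <+: v
  | [], _ => by simp [lcp]
  | a :: as, [] => by simp [lcp]
  | a :: as, b :: bs => by
      by_cases h : a = b
      · subst h; simpa [lcp] using lcp_prefix_right as bs
      · simp [lcp, h]

theorem prefix_lcp [DecidableEq A] : ∀ (p u v : List A), p <+: u → p <+: v → p <+: lcp u v
  | [], _, _, _, _ => List.nil_prefix
  | c :: p, [], v, hu, _ => by simp at hu
  | c :: p, a :: as, [], _, hv => by simp at hv
  | c :: p, a :: as, b :: bs, hu, hv => by
      rw [List.cons_prefix_cons] at hu hv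
      obtain ⟨rfl, hu⟩ := hu
      obtain ⟨rfl, hv⟩ := hv
      rw [lcp, if_pos rfl, List.cons_prefix_cons]
      exact ⟨rfl, prefix_lcp _ _ _ hu hv⟩

theorem lcp_concat [DecidableEq A] : ∀ (tu tv : List A) (c d : A),
    tu.length = tv.length → tu ≠ tv → lcp (tu ++ [c]) (tv ++ [d]) = lcp tu tv
  | [], [], _, _, _, hne => absurd rfl hne
  | [], b :: bs, _, _, hlen, _ => by simp at hlen
  | a :: as, [], _, _, hlen, _ => by simp at hlen
  | a :: as, b :: bs, c, d, hlen, hne => by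
      by_cases h : a = b
      · subst h
        have : as ≠ bs := fun h' => hne (by rw [h'])
        rw [List.cons_append, List.cons_append, lcp, if_pos rfl, lcp, if_pos rfl,
          lcp_concat as bs c d (by simpa using hlen) this]
      · simp [lcp, h]

theorem prefix_of_prefix_concat [DecidableEq A] {p t : List A} {c : A}
    (h : p <+: t ++ [c]) (hlen : p.length ≤ t.length) : p <+: t := by
  rw [List.prefix_iff_eq_take] at h ⊢
  rwa [List.take_append_of_le_length hlen] at h

theorem shift_decomp (s : List A) (hs : 1 ≤ s.length) (i : ℕ) (hi : i < s.length) :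
    ∃ c t, s.rotate (rshift s.length i) = c :: t ∧ s.rotate i = t ++ [c] := by
  obtain ⟨c, t, hct⟩ : ∃ c t, s.rotate (rshift s.length i) = c :: t := by
    cases h : s.rotate (rshift s.length i) with
    | nil =>
        have := List.length_rotate s (rshift s.length i)
        rw [h] at this; simp at this; omega
    | cons c t => exact ⟨c, t, rfl⟩
  refine ⟨c, t, hct, ?_⟩
  have h1 : (rshift s.length i + 1) % s.length = i := by
    unfold rshift
    rw [Nat.mod_add_mod]
    have h2 : i + s.length - 1 + 1 = i + s.length := by omega
    rw [h2, Nat.add_mod_right, Nat.mod_eq_of_lt hi]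
  calc s.rotate i = s.rotate ((rshift s.length i + 1) % s.length) := by rw [h1]
    _ = s.rotate (rshift s.length i + 1) := List.rotate_mod s _
    _ = (s.rotate (rshift s.length i)).rotate 1 := (List.rotate_rotate s _ 1).symm
    _ = (c :: t).rotate 1 := by rw [hct]
    _ = t ++ [c] := by rw [List.rotate_cons_succ, List.rotate_zero]

theorem rshift_succ_mod (n j : ℕ) (hn : 1 ≤ n) (hj : j < n) :
    rshift n ((j + 1) % n) = j := by
  unfold rshift
  have h1 : (j + 1) % n + n - 1 = (j + 1) % n + (n - 1) := by omega
  rw [h1, Nat.mod_add_mod]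
  have h2 : j + 1 + (n - 1) = j + n := by omega
  rw [h2, Nat.add_mod_right, Nat.mod_eq_of_lt hj]

theorem prec_irrefl [DecidableEq A] (π : List A → A → A → Prop) (u : List A) :
    ¬ Prec π u u := by
  rintro ⟨a, b, ha, _, _⟩
  rw [lcp_self, List.getElem?_eq_none (le_refl u.length)] at ha
  cases ha

theorem prec_iff [DecidableEq A] (π : List A → A → A → Prop) (u v : List A) (a b : A)
    (ha : u[(lcp u v).length]? = some a) (hb : v[(lcp u v).length]? = some b) :
    Prec π u v ↔ π (lcp u v) a b := by
  constructor
  · rintro ⟨a', b', ha', hb', h⟩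
    rw [ha] at ha'; rw [hb] at hb'
    cases ha'; cases hb'
    exact h
  · intro h; exact ⟨a, b, ha, hb, h⟩

/-- for a local ordering of context length `k ≥ 1` (the order
`π x` depends only on the suffix of `x` of length `min (|x|, k)`, expressed by
`hloc`), for symbols `x₁` and a length-`k` string `y` (so that `x₁ :: y` is
`x₁x₂⋯x_{k+1}` and `y = x₂⋯x_{k+1}`, with `k+1 ≤ n`), the right shift map is
an order-preserving bijection between rotations with prefix `y` ending with
`x₁` and rotations with prefix `x₁ :: y`. -/
theorem stmt9 [Fintype A] [DecidableEq A]
    (k : ℕ) (hk : 1 ≤ k)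
    (π : List A → A → A → Prop) (hπ : ∀ x, IsStrictTotalOrder A (π x))
    (hloc : ∀ x y : List A,
      x.drop (x.length - k) = y.drop (y.length - k) → π x = π y)
    (s : List A) (hs : 1 ≤ s.length) (hprim : Primitive s)
    (x₁ : A) (y : List A) (hy : y.length = k) (hkn : k + 1 ≤ s.length) :
    (∀ i < s.length, y <+: s.rotate i → (s.rotate i).getLast? = some x₁ →
      (x₁ :: y) <+: s.rotate (rshift s.length i)) ∧
    (∀ j < s.length, (x₁ :: y) <+: s.rotate j →
      ∃ i < s.length, y <+: s.rotate i ∧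
        (s.rotate i).getLast? = some x₁ ∧ rshift s.length i = j) ∧
    (∀ i < s.length, ∀ j < s.length,
      y <+: s.rotate i → (s.rotate i).getLast? = some x₁ →
      y <+: s.rotate j → (s.rotate j).getLast? = some x₁ →
      (Prec π (s.rotate i) (s.rotate j) ↔
        Prec π (s.rotate (rshift s.length i)) (s.rotate (rshift s.length j)))) := by
  refine ⟨?_, ?_, ?_⟩
  · -- part 1
    intro i hi hpre hlast
    obtain ⟨c, t, h1, h2⟩ := shift_decomp s hs i hi
    have htlen : t.length + 1 = s.length := by
      have := List.length_rotate s (rshift s.length i)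
      rw [h1] at this; simpa using this
    have hc : c = x₁ := by
      rw [h2, List.getLast?_concat] at hlast
      exact (Option.some.inj hlast)
    rw [hc] at h1 h2
    rw [h1, List.cons_prefix_cons]
    refine ⟨rfl, ?_⟩
    rw [h2] at hpre
    exact prefix_of_prefix_concat hpre (by omega)
  · -- part 2
    intro j hj hpre
    have hi : (j + 1) % s.length < s.length := Nat.mod_lt _ (by omega)
    obtain ⟨c, t, h1, h2⟩ := shift_decomp s hs ((j + 1) % s.length) hi
    have hr : rshift s.length ((j + 1) % s.length) = j := rshift_succ_mod _ _ hs hj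
    rw [hr] at h1
    rw [h1, List.cons_prefix_cons] at hpre
    obtain ⟨rfl, hyt⟩ := hpre
    refine ⟨(j + 1) % s.length, hi, ?_, ?_, hr⟩
    · rw [h2]; exact hyt.trans (List.prefix_append t _)
    · rw [h2, List.getLast?_concat]
  · -- part 3
    intro i hi j hj hyi hlasti hyj hlastj
    by_cases heq : s.rotate i = s.rotate j
    · have hij : i = j := hprim i j hi hj heq
      subst hij
      exact iff_of_false (prec_irrefl π _) (prec_irrefl π _)
    obtain ⟨c, tu, h1, h2⟩ := shift_decomp s hs i hi
    obtain ⟨d, tv, h3, h4⟩ := shift_decomp s hs j hj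
    have hc : c = x₁ := by
      rw [h2, List.getLast?_concat] at hlasti; exact Option.some.inj hlasti
    have hd : d = x₁ := by
      rw [h4, List.getLast?_concat] at hlastj; exact Option.some.inj hlastj
    rw [hc] at h1 h2; rw [hd] at h3 h4
    have htulen : tu.length + 1 = s.length := by
      have := List.length_rotate s (rshift s.length i)
      rw [h1] at this; simpa using this
    have htvlen : tv.length + 1 = s.length := by
      have := List.length_rotate s (rshift s.length j)
      rw [h3] at this; simpa using this
    have htne : tu ≠ tv := by
      intro h; apply heq; rw [h2, h4, h]
    have hlcp : lcp (s.rotate i) (s.rotate j) = lcp tu tv := by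
      rw [h2, h4]; exact lcp_concat tu tv x₁ x₁ (by omega) htne
    have hytu : y <+: tu := by
      rw [h2] at hyi
      exact prefix_of_prefix_concat hyi (by omega)
    have hytv : y <+: tv := by
      rw [h4] at hyj
      exact prefix_of_prefix_concat hyj (by omega)
    have hkL : k ≤ (lcp tu tv).length := by
      have := (prefix_lcp y tu tv hytu hytv).length_le
      omega
    have hLlt : (lcp tu tv).length < tu.length := by
      rcases lt_or_eq_of_le (lcp_prefix_left tu tv).length_le with h | h
      · exact h
      · exfalso
        have h5 : lcp tu tv = tu := (lcp_prefix_left tu tv).eq_of_length h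
        have h6 : lcp tu tv = tv := (lcp_prefix_right tu tv).eq_of_length (by omega)
        exact htne (h5 ▸ h6)
    obtain ⟨a, ha⟩ : ∃ a, tu[(lcp tu tv).length]? = some a :=
      ⟨tu[(lcp tu tv).length], List.getElem?_eq_getElem hLlt⟩
    obtain ⟨b, hb⟩ : ∃ b, tv[(lcp tu tv).length]? = some b :=
      ⟨tv[(lcp tu tv).length]'(by omega), List.getElem?_eq_getElem (by omega)⟩
    have hua : (s.rotate i)[(lcp (s.rotate i) (s.rotate j)).length]? = some a := by
      rw [hlcp, h2, List.getElem?_append, if_pos hLlt]; exact ha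
    have hvb : (s.rotate j)[(lcp (s.rotate i) (s.rotate j)).length]? = some b := by
      rw [hlcp, h4, List.getElem?_append, if_pos (by omega)]; exact hb
    have hlcp' : lcp (s.rotate (rshift s.length i)) (s.rotate (rshift s.length j))
        = x₁ :: lcp tu tv := by
      rw [h1, h3]; simp [lcp]
    have hua' : (s.rotate (rshift s.length i))[(lcp (s.rotate (rshift s.length i))
        (s.rotate (rshift s.length j))).length]? = some a := by
      rw [hlcp', h1]
      simpa using ha
    have hvb' : (s.rotate (rshift s.length j))[(lcp (s.rotate (rshift s.length i))
        (s.rotate (rshift s.length j))).length]? = some b := by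
      rw [hlcp', h3]
      simpa using hb
    rw [prec_iff π _ _ a b hua hvb, prec_iff π _ _ a b hua' hvb', hlcp, hlcp']
    have hπeq : π (lcp tu tv) = π (x₁ :: lcp tu tv) := by
      apply hloc
      have hd1 : (x₁ :: lcp tu tv).length - k = ((lcp tu tv).length - k) + 1 := by
        simp only [List.length_cons]; omega
      rw [hd1, List.drop_succ_cons]
    rw [hπeq]
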